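/- arXiv:2309.16864 — 2 statements merged into one kernel-verified Lean document; each statement's English description precedes it below -/
import Mathlib

section
/- Let $K$ be a macroid with generating measure $\mu$, i.e., $\mu$ is a Borel probability measure on the space of polytopes in $\mathbb{R}^n$ with bounded support and $h_K = \int h_P\, \mu(dP)$. If $K$ is indecomposable, then $K$ is a polytope. -/
open scoped Pointwise RealInnerProductSpace
open MeasureTheory

noncomputable section

/-- Support function of a convex body. -/
def sfn {n : ℕ} (K : ConvexBody (EuclideanSpace ℝ (Fin n))) (u : EuclideanSpace ℝ (Fin n)) : ℝ :=
  sSup ((fun x => ⟪x, u⟫) '' (K : Set (EuclideanSpace ℝ (Fin n))))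

/-- The support of a measure on a topological space. -/
def msupport {X : Type*} [TopologicalSpace X] [MeasurableSpace X] (μ : Measure X) : Set X :=
  {x | ∀ U : Set X, IsOpen U → x ∈ U → μ U ≠ 0}

/-- A convex body is a polytope if it is the convex hull of a finite set. -/
def IsPolytope {n : ℕ} (P : ConvexBody (EuclideanSpace ℝ (Fin n))) : Prop :=
  ∃ s : Finset (EuclideanSpace ℝ (Fin n)),
    (P : Set (EuclideanSpace ℝ (Fin n))) = convexHull ℝ ↑s

/-- The class of polytopes. -/
def Polytopes (n : ℕ) : Set (ConvexBody (EuclideanSpace ℝ (Fin n))) :=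
  {P | IsPolytope P}

/-- A convex body is indecomposable if in any Minkowski decomposition both summands
are homothets of the body. -/
def Indecomposable {n : ℕ} (K : ConvexBody (EuclideanSpace ℝ (Fin n))) : Prop :=
  ∀ A B : ConvexBody (EuclideanSpace ℝ (Fin n)), K = A + B →
    (∃ (c : ℝ) (x : EuclideanSpace ℝ (Fin n)), 0 ≤ c ∧
      (A : Set (EuclideanSpace ℝ (Fin n))) = c • (K : Set (EuclideanSpace ℝ (Fin n))) + {x}) ∧
    (∃ (c : ℝ) (x : EuclideanSpace ℝ (Fin n)), 0 ≤ c ∧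
      (B : Set (EuclideanSpace ℝ (Fin n))) = c • (K : Set (EuclideanSpace ℝ (Fin n))) + {x})

variable {n : ℕ}

local notation "V" => EuclideanSpace ℝ (Fin n)

lemma sfn_img_ne (K : ConvexBody V) (u : V) : ((fun x => ⟪x, u⟫) '' (K : Set V)).Nonempty :=
  K.nonempty.image _

lemma sfn_bdd (K : ConvexBody V) (u : V) : BddAbove ((fun x => ⟪x, u⟫) '' (K : Set V)) :=
  (K.isCompact.image (continuous_id.inner continuous_const)).bddAbove

lemma le_sfn (K : ConvexBody V) {x : V} (u : V) (hx : x ∈ (K : Set V)) : ⟪x, u⟫ ≤ sfn K u :=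
  le_csSup (sfn_bdd K u) ⟨x, hx, rfl⟩

lemma sfn_le (K : ConvexBody V) {u : V} {r : ℝ} (h : ∀ x ∈ (K : Set V), ⟪x, u⟫ ≤ r) :
    sfn K u ≤ r :=
  csSup_le (sfn_img_ne K u) (by rintro _ ⟨x, hx, rfl⟩; exact h x hx)

lemma exists_sfn (K : ConvexBody V) (u : V) : ∃ x ∈ (K : Set V), sfn K u = ⟪x, u⟫ := by
  obtain ⟨x, hx, hmax⟩ := K.isCompact.exists_isMaxOn K.nonempty
    ((continuous_id.inner continuous_const : Continuous fun x : V => ⟪x, u⟫)).continuousOn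
  exact ⟨x, hx, le_antisymm (sfn_le K fun y hy => hmax hy) (le_sfn K u hx)⟩

lemma sfn_zero_right (K : ConvexBody V) : sfn K 0 = 0 := by
  obtain ⟨x, hx, h⟩ := exists_sfn K 0
  simp [h]

lemma sfn_add_le (K : ConvexBody V) (u v : V) : sfn K (u + v) ≤ sfn K u + sfn K v := by
  refine sfn_le K fun x hx => ?_
  rw [inner_add_right]
  exact add_le_add (le_sfn K u hx) (le_sfn K v hx)

lemma sfn_smul_right (K : ConvexBody V) {c : ℝ} (hc : 0 ≤ c) (u : V) :
    sfn K (c • u) = c * sfn K u := by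
  obtain ⟨x, hx, hex⟩ := exists_sfn K u
  refine le_antisymm (sfn_le K fun y hy => ?_) ?_
  · rw [inner_smul_right]
    exact mul_le_mul_of_nonneg_left (le_sfn K u hy) hc
  · rw [hex, ← inner_smul_right]
    exact le_sfn K _ hx

lemma sfn_le_norm (K : ConvexBody V) {R : ℝ} (hR : ∀ x ∈ (K : Set V), ‖x‖ ≤ R) (u : V) :
    sfn K u ≤ R * ‖u‖ :=
  sfn_le K fun y hy => le_trans (real_inner_le_norm y u)
    (mul_le_mul_of_nonneg_right (hR y hy) (norm_nonneg u))

lemma abs_sfn_le (K : ConvexBody V) {R : ℝ} (hR : ∀ x ∈ (K : Set V), ‖x‖ ≤ R) (u : V) :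
    |sfn K u| ≤ R * ‖u‖ := by
  obtain ⟨x, hx⟩ := K.nonempty
  have hb : |⟪x, u⟫| ≤ R * ‖u‖ := le_trans (abs_real_inner_le_norm x u)
    (mul_le_mul_of_nonneg_right (hR x hx) (norm_nonneg u))
  have h1 := le_sfn K u hx
  have h2 := sfn_le_norm K hR u
  rw [abs_le] at hb ⊢
  exact ⟨by linarith [hb.1], h2⟩

lemma mem_of_inner_le_sfn (K : ConvexBody V) {x : V} (h : ∀ u, ⟪x, u⟫ ≤ sfn K u) :
    x ∈ (K : Set V) := by
  by_contra hx
  obtain ⟨f, r, hf, hr⟩ := geometric_hahn_banach_closed_point K.convex K.isClosed hx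
  set v : V := (InnerProductSpace.toDual ℝ V).symm f with hv
  have hfv : ∀ z : V, f z = ⟪v, z⟫ := fun z => by
    rw [hv, ← InnerProductSpace.toDual_symm_apply]
  have h1 : sfn K v ≤ r := sfn_le K fun y hy => by
    rw [real_inner_comm, ← hfv]; exact (hf y hy).le
  have h2 := h v
  rw [real_inner_comm, ← hfv] at h2
  linarith

lemma sfn_injective {K L : ConvexBody V} (h : ∀ u, sfn K u = sfn L u) : K = L := by
  ext x
  constructor
  · intro hx
    exact mem_of_inner_le_sfn L fun u => (h u) ▸ le_sfn K u hx
  · intro hx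
    exact mem_of_inner_le_sfn K fun u => (h u).symm ▸ le_sfn L u hx

lemma sfn_add_body (A B : ConvexBody V) (u : V) : sfn (A + B) u = sfn A u + sfn B u := by
  obtain ⟨a, ha, hea⟩ := exists_sfn A u
  obtain ⟨b, hb, heb⟩ := exists_sfn B u
  refine le_antisymm (sfn_le (A + B) fun x hx => ?_) ?_
  · rw [ConvexBody.coe_add] at hx
    obtain ⟨y, hy, z, hz, rfl⟩ := Set.mem_add.1 hx
    rw [inner_add_left]
    exact add_le_add (le_sfn A u hy) (le_sfn B u hz)
  · have : a + b ∈ ((A + B : ConvexBody V) : Set V) := by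
      rw [ConvexBody.coe_add]; exact Set.add_mem_add ha hb
    have := le_sfn (A + B) u this
    rw [inner_add_left] at this
    linarith

lemma sfn_homothet {A K : ConvexBody V} {c : ℝ} {x : V} (hc : 0 ≤ c)
    (h : (A : Set V) = c • (K : Set V) + {x}) (u : V) :
    sfn A u = c * sfn K u + ⟪x, u⟫ := by
  obtain ⟨k, hk, hek⟩ := exists_sfn K u
  refine le_antisymm (sfn_le A fun y hy => ?_) ?_
  · rw [h] at hy
    obtain ⟨z, hz, w, hw, rfl⟩ := Set.mem_add.1 hy
    obtain ⟨k', hk', rfl⟩ := Set.mem_smul_set.1 hz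
    rcases hw with rfl
    rw [inner_add_left, real_inner_smul_left]
    exact add_le_add (mul_le_mul_of_nonneg_left (le_sfn K u hk') hc) le_rfl
  · have hmem : c • k + x ∈ (A : Set V) := by
      rw [h]
      exact Set.add_mem_add (Set.smul_mem_smul_set hk) rfl
    have h2 := le_sfn A u hmem
    rw [inner_add_left, real_inner_smul_left, ← hek] at h2
    linarith

lemma sfn_sub_le_dist (P Q : ConvexBody V) (u : V) : sfn P u - sfn Q u ≤ dist P Q * ‖u‖ := by
  obtain ⟨p, hp, hep⟩ := exists_sfn P u
  have hid : Metric.infDist p (Q : Set V) ≤ Metric.hausdorffDist (P : Set V) (Q : Set V) :=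
    Metric.infDist_le_hausdorffDist_of_mem hp ConvexBody.hausdorffEdist_ne_top
  obtain ⟨q, hq, heq⟩ := Q.isCompact.exists_infDist_eq_dist Q.nonempty p
  have hdist : dist p q ≤ dist P Q := by
    rw [← heq, ← ConvexBody.hausdorffDist_coe]; exact hid
  have : ⟪p, u⟫ - ⟪q, u⟫ ≤ dist P Q * ‖u‖ := by
    have : ⟪p - q, u⟫ ≤ ‖p - q‖ * ‖u‖ := real_inner_le_norm _ _
    rw [inner_sub_left] at this
    have hn : ‖p - q‖ ≤ dist P Q := by rw [← dist_eq_norm]; exact hdist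
    nlinarith [norm_nonneg u]
  have h2 := le_sfn Q u hq
  rw [← hep] at *
  linarith

lemma abs_sfn_sub_le_dist (P Q : ConvexBody V) (u : V) :
    |sfn P u - sfn Q u| ≤ dist P Q * ‖u‖ := by
  rw [abs_le]
  constructor
  · have := sfn_sub_le_dist Q P u
    rw [dist_comm] at this; linarith
  · exact sfn_sub_le_dist P Q u

lemma continuous_sfn (u : V) : Continuous (fun P : ConvexBody V => sfn P u) := by
  rw [Metric.continuous_iff]
  intro P ε hε
  refine ⟨ε / (‖u‖ + 1), by positivity, fun Q hQ => ?_⟩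
  rw [Real.dist_eq]
  calc |sfn Q u - sfn P u| ≤ dist Q P * ‖u‖ := abs_sfn_sub_le_dist Q P u
    _ < ε := by
        rcases eq_or_lt_of_le (norm_nonneg u) with h | h
        · rw [← h]; simpa using hε
        · have h1 : dist Q P * ‖u‖ < ε / (‖u‖ + 1) * ‖u‖ := mul_lt_mul_of_pos_right hQ h
          have h2 : ε / (‖u‖ + 1) * ‖u‖ ≤ ε := by
            rw [div_mul_eq_mul_div, div_le_iff₀ (by linarith)]
            nlinarith
          linarith

lemma exists_body (g : (EuclideanSpace ℝ (Fin n)) → ℝ) (hzero : g 0 = 0)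
    (hadd : ∀ u v, g (u + v) ≤ g u + g v)
    (hhom : ∀ c : ℝ, 0 < c → ∀ u, g (c • u) = c * g u)
    {C : ℝ} (hbd : ∀ u, g u ≤ C * ‖u‖) :
    ∃ A : ConvexBody V, ∀ u, sfn A u = g u := by
  have hgneg : ∀ u, -g (-u) ≤ g u := fun u => by
    have := hadd u (-u); rw [add_neg_cancel, hzero] at this; linarith
  set s : Set V := {x | ∀ u, ⟪x, u⟫ ≤ g u} with hs
  -- linear functionals below g give elements of s
  have hrep : ∀ ℓ : V →ₗ[ℝ] ℝ, (∀ u, ℓ u ≤ g u) → ∃ y ∈ s, ∀ u, ⟪y, u⟫ = ℓ u := by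
    intro ℓ hℓ
    set y : V := (InnerProductSpace.toDual ℝ V).symm (LinearMap.toContinuousLinearMap ℓ) with hy
    have h1 : ∀ u, ⟪y, u⟫ = ℓ u := fun u => by
      rw [hy, InnerProductSpace.toDual_symm_apply]; rfl
    exact ⟨y, fun u => (h1 u).le.trans (hℓ u), h1⟩
  -- nonemptiness
  have hne : s.Nonempty := by
    obtain ⟨ℓ, -, hℓ⟩ := exists_extension_of_le_sublinear ((0 : V →ₗ[ℝ] ℝ).toPMap ⊥) g hhom hadd
      (by rintro ⟨x, hx⟩
          have hx0 : x = 0 := by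
            have : x ∈ (⊥ : Submodule ℝ V) := hx
            rwa [Submodule.mem_bot] at this
          simp only [LinearMap.toPMap_apply, LinearMap.zero_apply, hx0, hzero, le_refl]
          exact le_of_eq rfl)
    obtain ⟨y, hy, -⟩ := hrep ℓ hℓ
    exact ⟨y, hy⟩
  -- closed
  have hclosed : IsClosed s := by
    have : s = ⋂ u : V, {x : V | ⟪x, u⟫ ≤ g u} := by
      ext x; simp [hs, Set.mem_iInter]
    rw [this]
    exact isClosed_iInter fun u => isClosed_le (continuous_id.inner continuous_const)
      continuous_const
  -- convex
  have hconv : Convex ℝ s := by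
    intro x hx y hy a b ha hb hab
    intro u
    have h1 := hx u
    have h2 := hy u
    rw [inner_add_left, real_inner_smul_left, real_inner_smul_left]
    calc a * ⟪x, u⟫ + b * ⟪y, u⟫ ≤ a * g u + b * g u := by
          exact add_le_add (mul_le_mul_of_nonneg_left h1 ha) (mul_le_mul_of_nonneg_left h2 hb)
      _ = g u := by rw [← add_mul, hab, one_mul]
  -- bounded
  have hbdd : Bornology.IsBounded s := by
    rw [Metric.isBounded_iff_subset_closedBall 0]
    refine ⟨max C 0, fun x hx => ?_⟩
    rw [Metric.mem_closedBall, dist_zero_right]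
    have h1 := hx x
    rw [real_inner_self_eq_norm_mul_norm] at h1
    have h2 := (hbd x)
    rcases eq_or_lt_of_le (norm_nonneg x) with h | h
    · rw [← h]; exact le_max_right C 0
    · have : ‖x‖ ≤ C := by nlinarith
      exact this.trans (le_max_left C 0)
  set A : ConvexBody V := ⟨s, hconv, Metric.isCompact_of_isClosed_isBounded hclosed hbdd, hne⟩
    with hA
  refine ⟨A, fun u => ?_⟩
  rcases eq_or_ne u 0 with rfl | hu
  · rw [sfn_zero_right, hzero]
  refine le_antisymm (sfn_le A fun x hx => hx u) ?_
  have hside : ∀ z : (LinearPMap.mkSpanSingleton u (g u) hu : V →ₗ.[ℝ] ℝ).domain,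
      (LinearPMap.mkSpanSingleton u (g u) hu : V →ₗ.[ℝ] ℝ) z ≤ g z := by
    rintro ⟨z, hz⟩
    obtain ⟨c, hc⟩ := Submodule.mem_span_singleton.1 hz
    have hzz : (⟨z, hz⟩ : (LinearPMap.mkSpanSingleton u (g u) hu : V →ₗ.[ℝ] ℝ).domain) =
        ⟨c • u, by rw [hc]; exact hz⟩ := Subtype.ext hc.symm
    rw [hzz, LinearPMap.mkSpanSingleton'_apply]
    simp only [smul_eq_mul, RingHom.id_apply, ← hc]
    rcases lt_trichotomy c 0 with h | h | h
    · have h1 : g (c • u) = (-c) * g (-u) := by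
        rw [show c • u = (-c) • (-u) by simp, hhom (-c) (by linarith)]
      have h2 := hgneg u
      nlinarith
    · simp [h, hzero]
    · rw [hhom c h]
  obtain ⟨ℓ, hext, hℓ⟩ := exists_extension_of_le_sublinear
    (LinearPMap.mkSpanSingleton u (g u) hu) g hhom hadd hside
  obtain ⟨y, hy, hyℓ⟩ := hrep ℓ hℓ
  have h1 : ℓ u = g u := by
    have := hext ⟨u, Submodule.mem_span_singleton_self u⟩
    rwa [LinearPMap.mkSpanSingleton_apply] at this
  have := le_sfn A u (by exact hy)
  rw [hyℓ, h1] at this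
  exact this

lemma convexBody_isometry :
    Isometry (fun K : ConvexBody V =>
      (⟨⟨(K : Set V), K.isCompact⟩, K.nonempty⟩ : TopologicalSpace.NonemptyCompacts V)) := by
  refine Isometry.of_dist_eq fun K L => ?_
  rw [Metric.NonemptyCompacts.dist_eq]
  rfl

instance : SecondCountableTopology (ConvexBody V) :=
  convexBody_isometry.isEmbedding.secondCountableTopology

lemma msupport_compl_null {X : Type*} [TopologicalSpace X] [SecondCountableTopology X]
    [MeasurableSpace X] [OpensMeasurableSpace X] (μ : Measure X) : μ (msupport μ)ᶜ = 0 := by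
  obtain ⟨B, hBc, -, hB⟩ := TopologicalSpace.exists_countable_basis X
  have hsub : (msupport μ)ᶜ ⊆ ⋃₀ {b ∈ B | μ b = 0} := by
    intro x hx
    simp only [Set.mem_compl_iff, msupport, Set.mem_setOf_eq, not_forall] at hx
    obtain ⟨U, hU, hxU, hμU⟩ := hx
    rw [not_ne_iff] at hμU
    obtain ⟨b, hb, hxb, hbU⟩ := hB.exists_subset_of_mem_open hxU hU
    exact ⟨b, ⟨hb, le_antisymm (hμU ▸ measure_mono hbU) zero_le⟩, hxb⟩
  refine measure_mono_null hsub ?_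
  exact measure_sUnion_null_iff (hBc.mono (Set.sep_subset B _)) |>.2 fun b hb => hb.2

lemma eq_zero_of_abs_le_mul {a M : ℝ} (hM : 0 ≤ M) (h : ∀ ε > 0, |a| ≤ ε * M) : a = 0 := by
  by_contra ha
  have h1 : 0 < |a| := abs_pos.2 ha
  have h2 := h (|a| / (2 * (M + 1))) (by positivity)
  have h3 : |a| / (2 * (M + 1)) * M < |a| := by
    rw [div_mul_eq_mul_div, div_lt_iff₀ (by positivity)]
    nlinarith
  linarith

lemma sfn_zero_body (u : V) : sfn (0 : ConvexBody V) u = 0 := by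
  have h0 : (0 : V) ∈ ((0 : ConvexBody V) : Set V) := by
    rw [ConvexBody.coe_zero]; rfl
  refine le_antisymm (sfn_le _ fun x hx => ?_) ?_
  · rw [ConvexBody.coe_zero] at hx
    rcases hx with rfl
    simp
  · have := le_sfn (0 : ConvexBody V) u h0
    simpa using this

-- case of a point
lemma point_case {K : ConvexBody V} (hpt : ∀ u, sfn K u + sfn K (-u) ≤ 0) : IsPolytope K := by
  obtain ⟨x0, hx0⟩ := K.nonempty
  refine ⟨{x0}, ?_⟩
  have hKs : (K : Set V) = {x0} := by
    refine Set.eq_singleton_iff_unique_mem.2 ⟨hx0, fun x hx => ?_⟩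
    have key : ∀ u, ⟪x - x0, u⟫ ≤ 0 := fun u => by
      have h1 := le_sfn K u hx
      have h2 := le_sfn K (-u) hx0
      have h3 := hpt u
      rw [inner_neg_right] at h2
      rw [inner_sub_left]
      linarith
    have := key (x - x0)
    rw [sub_eq_zero.1 (real_inner_self_nonpos.1 this)]
  rw [hKs, Finset.coe_singleton, convexHull_singleton]

set_option maxHeartbeats 1000000 in
theorem indecomposable_macroid_is_polytope {n : ℕ}
    [MeasurableSpace (ConvexBody (EuclideanSpace ℝ (Fin n)))]
    [BorelSpace (ConvexBody (EuclideanSpace ℝ (Fin n)))]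
    (μ : Measure (ConvexBody (EuclideanSpace ℝ (Fin n)))) [IsProbabilityMeasure μ]
    (hconc : μ (Polytopes n)ᶜ = 0)
    (hbd : Bornology.IsBounded (Polytopes n ∩ msupport μ))
    (K : ConvexBody (EuclideanSpace ℝ (Fin n)))
    (hK : ∀ u, sfn K u = ∫ P, sfn P u ∂μ)
    (hInd : Indecomposable K) :
    IsPolytope K := by
  classical
  by_cases hpt : ∀ u, sfn K u + sfn K (-u) ≤ 0
  · exact point_case hpt
  push_neg at hpt
  obtain ⟨u0', hu0'⟩ := hpt
  have hu0ne : u0' ≠ 0 := by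
    rintro rfl
    rw [neg_zero, sfn_zero_right] at hu0'
    linarith
  set u0 : EuclideanSpace ℝ (Fin n) := ‖u0'‖⁻¹ • u0' with hu0def
  have hu0 : ‖u0‖ = 1 := norm_smul_inv_norm hu0ne
  have hinv_pos : (0:ℝ) < ‖u0'‖⁻¹ := by
    have := norm_pos_iff.2 hu0ne
    positivity
  have fK_pos : 0 < sfn K u0 + sfn K (-u0) := by
    have h1 : sfn K u0 = ‖u0'‖⁻¹ * sfn K u0' := sfn_smul_right K hinv_pos.le u0'
    have h2 : sfn K (-u0) = ‖u0'‖⁻¹ * sfn K (-u0') := by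
      rw [hu0def, ← smul_neg]
      exact sfn_smul_right K hinv_pos.le (-u0')
    rw [h1, h2, ← mul_add]
    positivity
  set fK := sfn K u0 + sfn K (-u0) with hfKdef
  -- the complement of the bounded carrier is null
  have hcompl : μ (Polytopes n ∩ msupport μ)ᶜ = 0 := by
    rw [Set.compl_inter]
    exact measure_union_null hconc (msupport_compl_null μ)
  -- uniform bound on support functions on the carrier
  obtain ⟨r, hr⟩ := hbd.subset_closedBall 0
  set r2 := max r 0 with hr2def
  have hr2 : 0 ≤ r2 := le_max_right r 0
  have hbound : ∀ P ∈ Polytopes n ∩ msupport μ, ∀ u, |sfn P u| ≤ r2 * ‖u‖ := by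
    intro P hP u
    have h1 := abs_sfn_sub_le_dist P 0 u
    rw [sfn_zero_body, sub_zero] at h1
    have hd : dist P 0 ≤ r2 := by
      have := hr hP
      rw [Metric.mem_closedBall] at this
      exact this.trans (le_max_left r 0)
    nlinarith [norm_nonneg u, dist_nonneg (x := P) (y := (0 : ConvexBody (EuclideanSpace ℝ (Fin n))))]
  have hae : ∀ᵐ P ∂μ, ∀ u, |sfn P u| ≤ r2 * ‖u‖ := by
    rw [MeasureTheory.ae_iff]
    refine measure_mono_null (fun P hP => ?_) hcompl
    simp only [Set.mem_setOf_eq, not_forall] at hP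
    intro hmem
    obtain ⟨u, hu⟩ := hP
    exact hu (hbound P hmem u)
  have hmeas : ∀ u, Measurable fun P : ConvexBody (EuclideanSpace ℝ (Fin n)) => sfn P u :=
    fun u => (continuous_sfn u).measurable
  have hint : ∀ u, Integrable (fun P => sfn P u) μ := fun u => by
    refine (integrable_const (r2 * ‖u‖)).mono' (hmeas u).aestronglyMeasurable ?_
    exact hae.mono fun P hP => by rw [Real.norm_eq_abs]; exact hP u
  -- bound for K itself
  obtain ⟨RK, hRKball⟩ := K.isBounded.subset_closedBall 0
  have hRK' : ∀ x ∈ (K : Set (EuclideanSpace ℝ (Fin n))), ‖x‖ ≤ RK := fun x hx => by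
    have := hRKball hx
    rwa [Metric.mem_closedBall, dist_zero_right] at this
  have hRK0 : 0 ≤ RK := by
    obtain ⟨x0, hx0⟩ := K.nonempty
    exact (norm_nonneg x0).trans (hRK' x0 hx0)
  -- the width function F
  set F : ConvexBody (EuclideanSpace ℝ (Fin n)) → ℝ := fun P => sfn P u0 + sfn P (-u0)
    with hFdef
  have hFcont : Continuous F := (continuous_sfn u0).add (continuous_sfn (-u0))
  have hFnn : ∀ P, 0 ≤ F P := fun P => by
    obtain ⟨x, hx⟩ := P.nonempty
    have h1 := le_sfn P u0 hx
    have h2 := le_sfn P (-u0) hx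
    rw [inner_neg_right] at h2
    simp only [hFdef]
    linarith
  have hFK : ∫ P, F P ∂μ = fK := by
    simp only [hFdef]
    rw [integral_add (hint u0) (hint (-u0)), ← hK u0, ← hK (-u0)]
  set G := {P : ConvexBody (EuclideanSpace ℝ (Fin n)) | 0 < F P} with hGdef
  have hGopen : IsOpen G := isOpen_lt continuous_const hFcont
  have hGpos : μ G ≠ 0 := by
    intro h0
    have hz : ∀ᵐ P ∂μ, F P = 0 := by
      rw [MeasureTheory.ae_iff]
      refine measure_mono_null (fun P hP => ?_) h0
      simp only [Set.mem_setOf_eq] at hP ⊢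
      exact lt_of_le_of_ne (hFnn P) (Ne.symm hP)
    have : ∫ P, F P ∂μ = 0 := by
      rw [integral_congr_ae (g := fun _ => (0:ℝ)) hz, integral_zero]
    rw [hFK] at this
    linarith
  -- pick a polytope in the support with positive width
  have hQex : (G ∩ (Polytopes n ∩ msupport μ)).Nonempty := by
    rw [Set.nonempty_iff_ne_empty]
    intro hemp
    apply hGpos
    refine measure_mono_null (fun P hP => ?_) hcompl
    intro hmem
    exact Set.eq_empty_iff_forall_notMem.1 hemp P ⟨hP, hmem⟩
  obtain ⟨Q, hQG, hQP, hQsupp⟩ := hQex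
  set lam := F Q / fK with hlamdef
  have hlam_pos : 0 < lam := div_pos hQG fK_pos
  -- the key approximation claim
  have key : ∀ ε > 0, ∃ y : EuclideanSpace ℝ (Fin n),
      ∀ u, |sfn Q u - lam * sfn K u - ⟪y, u⟫| ≤ ε * ‖u‖ := by
    intro ε hε
    set D : ℝ := 1 + 2 * RK / fK with hDdef
    have hD : 0 < D := by positivity
    set ε' := ε / D with hε'def
    have hε' : 0 < ε' := by positivity
    set S := Metric.ball Q ε' with hSdef
    have hSopen : IsOpen S := Metric.isOpen_ball
    have hSmeas : MeasurableSet S := hSopen.measurableSet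
    have hμS : μ S ≠ 0 := hQsupp S hSopen (Metric.mem_ball_self hε')
    set m := (μ S).toReal with hmdef
    have hm_pos : 0 < m := ENNReal.toReal_pos hμS (measure_ne_top μ S)
    have hm_le : m ≤ 1 := by
      rw [hmdef]
      exact ENNReal.toReal_le_of_le_ofReal one_pos.le (by simpa using prob_le_one (μ := μ) (s := S))
    -- the two averages
    have hbody : ∀ T : Set (ConvexBody (EuclideanSpace ℝ (Fin n))), MeasurableSet T →
        ∃ A : ConvexBody (EuclideanSpace ℝ (Fin n)),
          ∀ u, sfn A u = ∫ P in T, sfn P u ∂μ := by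
      intro T hT
      refine exists_body _ ?_ ?_ ?_ (C := r2) ?_
      · simp [sfn_zero_right]
      · intro u v
        rw [← integral_add ((hint u).restrict) ((hint v).restrict)]
        refine integral_mono ((hint (u+v)).restrict) (((hint u).add (hint v)).restrict) ?_
        exact fun P => sfn_add_le P u v
      · intro c hc u
        rw [← integral_const_mul]
        exact integral_congr_ae (Filter.Eventually.of_forall fun P => sfn_smul_right P hc.le u)
      · intro u
        have hb : ∀ᵐ P ∂(μ.restrict T), ‖sfn P u‖ ≤ r2 * ‖u‖ :=
          ae_restrict_of_ae (hae.mono fun P hP => by rw [Real.norm_eq_abs]; exact hP u)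
        have h1 := norm_integral_le_of_norm_le_const hb
        have h2 : (μ.restrict T Set.univ).toReal ≤ 1 := by
          rw [Measure.restrict_apply_univ]
          exact ENNReal.toReal_le_of_le_ofReal one_pos.le (by simpa using prob_le_one (μ := μ) (s := T))
        calc ∫ P in T, sfn P u ∂μ ≤ ‖∫ P in T, sfn P u ∂μ‖ := le_abs_self _
          _ ≤ r2 * ‖u‖ * (μ.restrict T Set.univ).toReal := h1
          _ ≤ r2 * ‖u‖ * 1 := by
              exact mul_le_mul_of_nonneg_left h2 (by positivity)
          _ = r2 * ‖u‖ := mul_one _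
    obtain ⟨A, hA⟩ := hbody S hSmeas
    obtain ⟨B, hB⟩ := hbody Sᶜ hSmeas.compl
    have hKAB : K = A + B := by
      refine sfn_injective fun u => ?_
      rw [sfn_add_body, hA, hB, hK u, integral_add_compl hSmeas (hint u)]
    obtain ⟨⟨c, x, hc, hAx⟩, -⟩ := hInd A B hKAB
    have hgS : ∀ u, (∫ P in S, sfn P u ∂μ) = c * sfn K u + ⟪x, u⟫ := fun u => by
      rw [← hA u]
      exact sfn_homothet hc hAx u
    have hest : ∀ u, |(∫ P in S, sfn P u ∂μ) - m * sfn Q u| ≤ ε' * ‖u‖ * m := by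
      intro u
      have heq : (∫ P in S, sfn P u ∂μ) - m * sfn Q u
          = ∫ P in S, (sfn P u - sfn Q u) ∂μ := by
        rw [integral_sub ((hint u).restrict) (integrable_const _), integral_const,
          measureReal_restrict_apply_univ, smul_eq_mul]
        rfl
      have hb : ∀ᵐ P ∂(μ.restrict S), ‖sfn P u - sfn Q u‖ ≤ ε' * ‖u‖ := by
        refine (ae_restrict_mem hSmeas).mono fun P hP => ?_
        have hd : dist P Q < ε' := by rwa [hSdef, Metric.mem_ball] at hP
        calc ‖sfn P u - sfn Q u‖ = |sfn P u - sfn Q u| := rfl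
          _ ≤ dist P Q * ‖u‖ := abs_sfn_sub_le_dist P Q u
          _ ≤ ε' * ‖u‖ := mul_le_mul_of_nonneg_right hd.le (norm_nonneg u)
      have h1 := norm_integral_le_of_norm_le_const hb
      rw [measureReal_restrict_apply_univ] at h1
      rw [heq]
      exact h1
    set c' := c / m with hc'def
    set y := m⁻¹ • x with hydef
    have hmain : ∀ u, |c' * sfn K u + ⟪y, u⟫ - sfn Q u| ≤ ε' * ‖u‖ := by
      intro u
      have h1 := hest u
      have heq : c' * sfn K u + ⟪y, u⟫ - sfn Q u
          = ((∫ P in S, sfn P u ∂μ) - m * sfn Q u) / m := by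
        rw [hgS u, hc'def, hydef, real_inner_smul_left]
        field_simp
      rw [heq, abs_div, abs_of_pos hm_pos, div_le_iff₀ hm_pos]
      linarith
    have hFQ : F Q = sfn Q u0 + sfn Q (-u0) := rfl
    have hc'lam : |c' - lam| ≤ 2 * ε' / fK := by
      have h1 := hmain u0
      have h2 := hmain (-u0)
      rw [hu0] at h1
      rw [norm_neg, hu0] at h2
      rw [inner_neg_right] at h2
      have h3 : |c' * fK - F Q| ≤ 2 * ε' := by
        have e : c' * fK - F Q = (c' * sfn K u0 + ⟪y, u0⟫ - sfn Q u0)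
            + (c' * sfn K (-u0) + -⟪y, u0⟫ - sfn Q (-u0)) := by
          rw [hfKdef, hFQ]; ring
        rw [e]
        calc |_| ≤ |c' * sfn K u0 + ⟪y, u0⟫ - sfn Q u0|
              + |c' * sfn K (-u0) + -⟪y, u0⟫ - sfn Q (-u0)| := abs_add_le _ _
          _ ≤ 2 * ε' := by rw [mul_one] at h1 h2; linarith
      have e2 : c' - lam = (c' * fK - F Q) / fK := by
        rw [hlamdef]; field_simp
      rw [e2, abs_div, abs_of_pos fK_pos, div_le_div_iff_of_pos_right fK_pos]
      exact h3
    refine ⟨y, fun u => ?_⟩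
    have h3 := hmain u
    have h4 : |(c' - lam) * sfn K u| ≤ (2 * ε' / fK) * (RK * ‖u‖) := by
      rw [abs_mul]
      exact mul_le_mul hc'lam (abs_sfn_le K hRK' u) (abs_nonneg _) (by positivity)
    have e3 : sfn Q u - lam * sfn K u - ⟪y, u⟫
        = -(c' * sfn K u + ⟪y, u⟫ - sfn Q u) + (c' - lam) * sfn K u := by ring
    rw [e3]
    calc |_| ≤ |-(c' * sfn K u + ⟪y, u⟫ - sfn Q u)| + |(c' - lam) * sfn K u| := abs_add_le _ _
      _ ≤ ε' * ‖u‖ + (2 * ε' / fK) * (RK * ‖u‖) := by rw [abs_neg]; exact add_le_add h3 h4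
      _ = ε' * D * ‖u‖ := by rw [hDdef]; field_simp
      _ = ε * ‖u‖ := by rw [hε'def]; field_simp
  -- linearity of the defect
  set g0 : EuclideanSpace ℝ (Fin n) → ℝ := fun u => sfn Q u - lam * sfn K u with hg0def
  have hadd0 : ∀ u v, g0 (u + v) = g0 u + g0 v := by
    intro u v
    have h : ∀ ε > 0, |g0 (u + v) - g0 u - g0 v| ≤ ε * (‖u + v‖ + ‖u‖ + ‖v‖) := by
      intro ε hε
      obtain ⟨y, hy⟩ := key ε hε
      have e : g0 (u + v) - g0 u - g0 v
          = (g0 (u + v) - ⟪y, u + v⟫) - (g0 u - ⟪y, u⟫) - (g0 v - ⟪y, v⟫) := by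
        rw [inner_add_right]; ring
      have h1 := hy (u + v)
      have h2 := hy u
      have h3 := hy v
      rw [e]
      have t1 : |g0 (u+v) - ⟪y, u+v⟫| ≤ ε * ‖u+v‖ := h1
      have t2 : |g0 u - ⟪y, u⟫| ≤ ε * ‖u‖ := h2
      have t3 : |g0 v - ⟪y, v⟫| ≤ ε * ‖v‖ := h3
      calc |_| ≤ |(g0 (u+v) - ⟪y, u+v⟫) - (g0 u - ⟪y, u⟫)| + |g0 v - ⟪y, v⟫| := abs_sub _ _
        _ ≤ (|g0 (u+v) - ⟪y, u+v⟫| + |g0 u - ⟪y, u⟫|) + |g0 v - ⟪y, v⟫| :=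
            add_le_add_left (abs_sub _ _) _
        _ ≤ ε * (‖u + v‖ + ‖u‖ + ‖v‖) := by nlinarith
    have := eq_zero_of_abs_le_mul (by positivity) h
    linarith
  have hsmul0 : ∀ (c : ℝ) u, g0 (c • u) = c * g0 u := by
    intro c u
    have h : ∀ ε > 0, |g0 (c • u) - c * g0 u| ≤ ε * (2 * |c| * ‖u‖) := by
      intro ε hε
      obtain ⟨y, hy⟩ := key ε hε
      have e : g0 (c • u) - c * g0 u
          = (g0 (c • u) - ⟪y, c • u⟫) - c * (g0 u - ⟪y, u⟫) := by
        rw [inner_smul_right]; ring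
      have h1 := hy (c • u)
      have h2 := hy u
      rw [norm_smul] at h1
      rw [e]
      calc |_| ≤ |g0 (c • u) - ⟪y, c • u⟫| + |c * (g0 u - ⟪y, u⟫)| := abs_sub _ _
        _ = |g0 (c • u) - ⟪y, c • u⟫| + |c| * |g0 u - ⟪y, u⟫| := by rw [abs_mul]
        _ ≤ ε * (2 * |c| * ‖u‖) := by
            have := mul_le_mul_of_nonneg_left h2 (abs_nonneg c)
            simp only [Real.norm_eq_abs] at h1
            nlinarith [abs_nonneg c]
    have := eq_zero_of_abs_le_mul (by positivity) h
    linarith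
  set ℓ : EuclideanSpace ℝ (Fin n) →ₗ[ℝ] ℝ :=
    { toFun := g0
      map_add' := hadd0
      map_smul' := fun c u => by simp only [smul_eq_mul, RingHom.id_apply]; exact hsmul0 c u }
    with hℓdef
  set y := (InnerProductSpace.toDual ℝ (EuclideanSpace ℝ (Fin n))).symm
    (LinearMap.toContinuousLinearMap ℓ) with hydef2
  have hy : ∀ u, ⟪y, u⟫ = g0 u := fun u => by
    rw [hydef2, InnerProductSpace.toDual_symm_apply]; rfl
  -- Q is a homothet of K
  set ptY : ConvexBody (EuclideanSpace ℝ (Fin n)) :=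
    ⟨{y}, convex_singleton y, isCompact_singleton, Set.singleton_nonempty y⟩ with hptY
  have hQeq : (Q : Set (EuclideanSpace ℝ (Fin n)))
      = lam • (K : Set (EuclideanSpace ℝ (Fin n))) + {y} := by
    have hQB : Q = lam • K + ptY := by
      refine sfn_injective fun u => ?_
      have hcoe : ((lam • K + ptY : ConvexBody (EuclideanSpace ℝ (Fin n)))
          : Set (EuclideanSpace ℝ (Fin n)))
          = lam • (K : Set (EuclideanSpace ℝ (Fin n))) + {y} := by
        rw [ConvexBody.coe_add, ConvexBody.coe_smul]; rfl
      rw [sfn_homothet hlam_pos.le hcoe u]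
      have := hy u
      simp only [hg0def] at this
      linarith
    rw [hQB, ConvexBody.coe_add, ConvexBody.coe_smul]; rfl
  obtain ⟨s, hsQ⟩ := hQP
  refine ⟨s.image (fun v => lam⁻¹ • (v + -y)), ?_⟩
  have hKset : (K : Set (EuclideanSpace ℝ (Fin n)))
      = lam⁻¹ • ((Q : Set (EuclideanSpace ℝ (Fin n))) + {-y}) := by
    rw [hQeq, add_assoc]
    have h1 : ({y} + {-y} : Set (EuclideanSpace ℝ (Fin n))) = {0} := by
      rw [Set.singleton_add_singleton, add_neg_cancel]
    rw [h1]
    have h2 : (lam • (K : Set (EuclideanSpace ℝ (Fin n))) + {0})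
        = lam • (K : Set (EuclideanSpace ℝ (Fin n))) := by
      rw [Set.add_singleton]
      simp
    rw [h2, smul_smul, inv_mul_cancel₀ hlam_pos.ne', one_smul]
  rw [hKset, hsQ]
  rw [Finset.coe_image]
  have himg : (fun v => lam⁻¹ • (v + -y)) '' (s : Set (EuclideanSpace ℝ (Fin n)))
      = lam⁻¹ • ((s : Set (EuclideanSpace ℝ (Fin n))) + {-y}) := by
    rw [Set.add_singleton, ← Set.image_smul, Set.image_image]
  rw [himg, convexHull_smul, convexHull_add, convexHull_singleton]
end
end

section
/- Let $X$ be a separable metric space and $f : X \to \mathcal{K}^n$ a map into the space of convex bodies with the Hausdorff metric, such that for every unit vector $u$ and every $\lambda \in \mathbb{R}$ the set $\{x \in X : h_{f(x)}(u) \ge \lambda\}$ is closed. Then $f$ is Borel measurable. -/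
open scoped Pointwise RealInnerProductSpace
open MeasureTheory

noncomputable section

section Aux

variable {n : ℕ}

local notation "E" => EuclideanSpace ℝ (Fin n)

lemma inner_le_sfn (K : ConvexBody E) (u : E) {x : E} (hx : x ∈ K) : ⟪x, u⟫ ≤ sfn K u :=
  le_csSup ((K.isCompact.image (continuous_id.inner continuous_const)).bddAbove)
    ⟨x, hx, rfl⟩

lemma sfn_le_s17 (K : ConvexBody E) (u : E) {c : ℝ} (hc : ∀ x ∈ K, ⟪x, u⟫ ≤ c) : sfn K u ≤ c :=
  csSup_le (K.nonempty.image _) (by rintro y ⟨x, hx, rfl⟩; exact hc x hx)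

lemma sfn_le_add_of_dist (K L : ConvexBody E) {r : ℝ}
    (hKL : ∀ x ∈ K, ∃ y ∈ L, dist x y ≤ r) {u : E} (hu : ‖u‖ = 1) :
    sfn K u ≤ sfn L u + r := by
  refine sfn_le_s17 K u fun x hx => ?_
  obtain ⟨y, hy, hxy⟩ := hKL x hx
  have h1 : ⟪x - y, u⟫ ≤ r := by
    calc ⟪x - y, u⟫ ≤ ‖x - y‖ * ‖u‖ := real_inner_le_norm _ _
    _ = dist x y := by rw [hu, mul_one, dist_eq_norm]
    _ ≤ r := hxy
  have h2 : ⟪x, u⟫ = ⟪y, u⟫ + ⟪x - y, u⟫ := by rw [inner_sub_left]; ring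
  calc ⟪x, u⟫ ≤ ⟪y, u⟫ + r := by rw [h2]; exact add_le_add_right h1 _
  _ ≤ sfn L u + r := add_le_add_left (inner_le_sfn L u hy) r

/-- Separation: the converse direction. -/
lemma exists_dist_le_of_sfn (K L : ConvexBody E) {r : ℝ} (hr : 0 ≤ r)
    (h : ∀ u : E, ‖u‖ = 1 → sfn K u ≤ sfn L u + r) :
    ∀ x ∈ K, ∃ y ∈ L, dist x y ≤ r := by
  intro x hx
  set s : Set E := (L : Set E) + Metric.closedBall (0 : E) r with hs
  have hxs : x ∈ s := by
    by_contra hxs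
    have hconv : Convex ℝ s := L.convex.add (convex_closedBall 0 r)
    have hclosed : IsClosed s :=
      (L.isCompact.add (isCompact_closedBall (0 : E) r)).isClosed
    obtain ⟨φ, c, hφs, hφx⟩ := geometric_hahn_banach_closed_point hconv hclosed hxs
    set v : E := (InnerProductSpace.toDual ℝ E).symm φ with hv
    have hvinner : ∀ z : E, ⟪v, z⟫ = φ z := fun z => InnerProductSpace.toDual_symm_apply
    obtain ⟨a0, ha0⟩ := L.nonempty
    have ha0s : a0 ∈ s := ⟨a0, ha0, 0, Metric.mem_closedBall_self hr, add_zero a0⟩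
    have hvne : v ≠ 0 := by
      intro h0
      have h1 : φ a0 < c := hφs a0 ha0s
      have h2 : φ a0 = 0 := by rw [← hvinner, h0, inner_zero_left]
      have h3 : φ x = 0 := by rw [← hvinner, h0, inner_zero_left]
      linarith
    have hvpos : 0 < ‖v‖ := norm_pos_iff.2 hvne
    set u : E := ‖v‖⁻¹ • v with hu
    have hunorm : ‖u‖ = 1 := by
      rw [hu, norm_smul, norm_inv, norm_norm, inv_mul_cancel₀ hvpos.ne']
    have hvu : ⟪v, u⟫ = ‖v‖ := by
      rw [hu, real_inner_smul_right, real_inner_self_eq_norm_sq]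
      field_simp
    -- sfn L u ≤ c/‖v‖ - r
    have hL : sfn L u ≤ c / ‖v‖ - r := by
      refine sfn_le_s17 L u fun a ha => ?_
      have hmem : a + r • u ∈ s := by
        refine ⟨a, ha, r • u, ?_, rfl⟩
        simp [norm_smul, hunorm, abs_of_nonneg hr, hr]
      have h1 : φ (a + r • u) < c := hφs _ hmem
      have h2 : ⟪v, a⟫ + r * ‖v‖ < c := by
        have := hvinner (a + r • u)
        rw [inner_add_right, real_inner_smul_right, hvu] at this
        linarith
      have h3 : ⟪a, u⟫ = ‖v‖⁻¹ * ⟪v, a⟫ := by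
        rw [hu, real_inner_smul_right, real_inner_comm]
      rw [h3]
      have h4 : ‖v‖⁻¹ * ⟪v, a⟫ * ‖v‖ = ⟪v, a⟫ := by field_simp
      rw [div_sub' hvpos.ne', le_div_iff₀ hvpos]
      linarith
    have hK : c / ‖v‖ < sfn K u := by
      have h1 : c < ⟪v, x⟫ := by rw [hvinner]; exact hφx
      have h2 : ⟪x, u⟫ = ‖v‖⁻¹ * ⟪v, x⟫ := by
        rw [hu, real_inner_smul_right, real_inner_comm]
      have h3 : c / ‖v‖ < ⟪x, u⟫ := by
        rw [h2, div_eq_inv_mul]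
        exact (mul_lt_mul_iff_right₀ (inv_pos.2 hvpos)).2 h1
      exact h3.trans_le (inner_le_sfn K u hx)
    have := h u hunorm
    linarith
  obtain ⟨y, hy, b, hb, hyb⟩ := hxs
  refine ⟨y, hy, ?_⟩
  have hxy : x - y = b := by rw [← hyb]; exact add_sub_cancel_left y b
  rw [dist_eq_norm, hxy]
  simpa using hb

lemma abs_sfn_sub_le (A : ConvexBody E) {C : ℝ} (hC : ∀ x ∈ A, ‖x‖ ≤ C) (u v : E) :
    |sfn A u - sfn A v| ≤ C * ‖u - v‖ := by
  have key : ∀ w z : E, sfn A w ≤ sfn A z + C * ‖w - z‖ := by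
    intro w z
    refine sfn_le_s17 A w fun x hx => ?_
    have h1 : ⟪x, w⟫ = ⟪x, z⟫ + ⟪x, w - z⟫ := by rw [inner_sub_right]; ring
    have h2 : ⟪x, w - z⟫ ≤ C * ‖w - z‖ := by
      calc ⟪x, w - z⟫ ≤ ‖x‖ * ‖w - z‖ := real_inner_le_norm _ _
      _ ≤ C * ‖w - z‖ := mul_le_mul_of_nonneg_right (hC x hx) (norm_nonneg _)
    have h3 := inner_le_sfn A z hx
    linarith
  rw [abs_sub_le_iff]
  constructor
  · have := key u v; linarith
  · have := key v u; rw [norm_sub_rev] at this; linarith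

lemma dist_le_iff_sfn (K L : ConvexBody E) {r : ℝ} (hr : 0 ≤ r) :
    dist K L ≤ r ↔ ∀ u : E, ‖u‖ = 1 → |sfn K u - sfn L u| ≤ r := by
  constructor
  · intro hd u hu
    have hKL : ∀ x ∈ K, ∃ y ∈ L, dist x y ≤ r := by
      intro x hx
      have h1 : Metric.infDist x (L : Set E) ≤ r :=
        (Metric.infDist_le_hausdorffDist_of_mem hx ConvexBody.hausdorffEdist_ne_top).trans hd
      obtain ⟨y, hy, hyd⟩ := L.isCompact.exists_infDist_eq_dist L.nonempty x
      exact ⟨y, hy, by rw [← hyd]; exact h1⟩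
    have hLK : ∀ x ∈ L, ∃ y ∈ K, dist x y ≤ r := by
      intro x hx
      have h1 : Metric.infDist x (K : Set E) ≤ r := by
        refine le_trans ?_ hd
        rw [dist_comm]
        exact Metric.infDist_le_hausdorffDist_of_mem hx ConvexBody.hausdorffEdist_ne_top
      obtain ⟨y, hy, hyd⟩ := K.isCompact.exists_infDist_eq_dist K.nonempty x
      exact ⟨y, hy, by rw [← hyd]; exact h1⟩
    rw [abs_sub_le_iff]
    constructor
    · have := sfn_le_add_of_dist K L hKL hu; linarith
    · have := sfn_le_add_of_dist L K hLK hu; linarith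
  · intro h
    have h1 : ∀ x ∈ K, ∃ y ∈ L, dist x y ≤ r :=
      exists_dist_le_of_sfn K L hr fun u hu => by
        have := (abs_sub_le_iff.1 (h u hu)).1; linarith
    have h2 : ∀ x ∈ L, ∃ y ∈ K, dist x y ≤ r :=
      exists_dist_le_of_sfn L K hr fun u hu => by
        have := (abs_sub_le_iff.1 (h u hu)).2; linarith
    exact Metric.hausdorffDist_le_of_mem_dist hr h1 h2

end Aux

section Meas

variable {n : ℕ} {X : Type*} [MetricSpace X] [TopologicalSpace.SeparableSpace X]
  [MeasurableSpace X] [BorelSpace X]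

local notation "E" => EuclideanSpace ℝ (Fin n)

lemma measurable_sfn_comp (f : X → ConvexBody E)
    (h : ∀ u : E, ‖u‖ = 1 → ∀ lam : ℝ, IsClosed {x : X | lam ≤ sfn (f x) u})
    {u : E} (hu : ‖u‖ = 1) : Measurable fun x => sfn (f x) u :=
  measurable_of_Ici fun lam => (h u hu lam).measurableSet

lemma measurableSet_dist_le (f : X → ConvexBody E)
    (h : ∀ u : E, ‖u‖ = 1 → ∀ lam : ℝ, IsClosed {x : X | lam ≤ sfn (f x) u})
    (K : ConvexBody E) (r : ℝ) : MeasurableSet {x : X | dist (f x) K ≤ r} := by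
  rcases lt_or_ge r 0 with hr | hr
  · have : {x : X | dist (f x) K ≤ r} = ∅ := by
      rw [Set.eq_empty_iff_forall_notMem]
      intro x hx
      exact absurd (le_trans dist_nonneg hx) (not_le.2 hr)
    rw [this]; exact MeasurableSet.empty
  · obtain ⟨D, hDc, hDd⟩ := TopologicalSpace.exists_countable_dense (Metric.sphere (0 : E) 1)
    have key : {x : X | dist (f x) K ≤ r} =
        ⋂ u ∈ D, {x : X | |sfn (f x) (u : E) - sfn K (u : E)| ≤ r} := by
      ext x
      simp only [Set.mem_setOf_eq, Set.mem_iInter]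
      constructor
      · intro hd u _
        exact (dist_le_iff_sfn (f x) K hr).1 hd _ (mem_sphere_zero_iff_norm.1 u.2)
      · intro hD
        refine (dist_le_iff_sfn (f x) K hr).2 fun u hu => ?_
        obtain ⟨C1, hC1⟩ := (f x).isBounded.exists_norm_le
        obtain ⟨C2, hC2⟩ := K.isBounded.exists_norm_le
        obtain ⟨C, hCpos, hC1', hC2'⟩ :
            ∃ C : ℝ, 0 < C ∧ (∀ z ∈ f x, ‖z‖ ≤ C) ∧ ∀ z ∈ K, ‖z‖ ≤ C := by
          refine ⟨|C1| + |C2| + 1, by positivity, fun z hz => ?_, fun z hz => ?_⟩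
          · have := abs_nonneg C2; have := le_abs_self C1; have := hC1 z hz; linarith
          · have := abs_nonneg C1; have := le_abs_self C2; have := hC2 z hz; linarith
        refine le_of_forall_pos_le_add fun ε hε => ?_
        set uS : Metric.sphere (0 : E) 1 := ⟨u, mem_sphere_zero_iff_norm.2 hu⟩ with huS
        obtain ⟨v, hvD, hvd⟩ := hDd.exists_dist_lt uS (div_pos hε (by positivity : (0:ℝ) < 2 * C))
        have hdist : ‖u - (v : E)‖ < ε / (2 * C) := by
          rw [← dist_eq_norm]
          exact hvd
        have hA := abs_sfn_sub_le (f x) hC1' u (v : E)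
        have hK := abs_sfn_sub_le K hC2' u (v : E)
        have hv := hD v hvD
        have hsplit : sfn (f x) u - sfn K u =
            (sfn (f x) (v : E) - sfn K (v : E)) + (sfn (f x) u - sfn (f x) (v : E))
              + (sfn K (v : E) - sfn K u) := by ring
        have htri := abs_add_three (sfn (f x) (v : E) - sfn K (v : E))
          (sfn (f x) u - sfn (f x) (v : E)) (sfn K (v : E) - sfn K u)
        rw [← hsplit] at htri
        have h1 : |sfn K (v : E) - sfn K u| = |sfn K u - sfn K (v : E)| := abs_sub_comm _ _
        have h2 : C * ‖u - (v : E)‖ ≤ C * (ε / (2 * C)) :=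
          mul_le_mul_of_nonneg_left hdist.le hCpos.le
        have h3 : C * (ε / (2 * C)) = ε / 2 := by field_simp
        have h4 : |sfn K (v : E) - sfn K u| ≤ C * ‖u - (v : E)‖ := by
          rw [abs_sub_comm]; exact hK
        calc |sfn (f x) u - sfn K u| ≤ |sfn (f x) (v : E) - sfn K (v : E)|
              + |sfn (f x) u - sfn (f x) (v : E)| + |sfn K (v : E) - sfn K u| := htri
          _ ≤ r + C * ‖u - (v : E)‖ + C * ‖u - (v : E)‖ :=
              add_le_add (add_le_add hv hA) h4
          _ ≤ r + ε := by
              have h5 : C * ‖u - (v : E)‖ ≤ ε / 2 := by rw [← h3]; exact h2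
              linarith
    rw [key]
    refine MeasurableSet.biInter hDc fun u _ => ?_
    exact (((measurable_sfn_comp f h (mem_sphere_zero_iff_norm.1 u.2)).sub
      measurable_const).abs) measurableSet_Iic

lemma measurable_dist_comp (f : X → ConvexBody E)
    (h : ∀ u : E, ‖u‖ = 1 → ∀ lam : ℝ, IsClosed {x : X | lam ≤ sfn (f x) u})
    (K : ConvexBody E) : Measurable fun x => dist (f x) K :=
  measurable_of_Iic fun r => measurableSet_dist_le f h K r

end Meas

theorem measurable_of_superlevel_closed {n : ℕ} {X : Type*} [MetricSpace X]
    [TopologicalSpace.SeparableSpace X] [MeasurableSpace X] [BorelSpace X]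
    [MeasurableSpace (ConvexBody (EuclideanSpace ℝ (Fin n)))]
    [BorelSpace (ConvexBody (EuclideanSpace ℝ (Fin n)))]
    (f : X → ConvexBody (EuclideanSpace ℝ (Fin n)))
    (h : ∀ u : EuclideanSpace ℝ (Fin n), ‖u‖ = 1 → ∀ lam : ℝ,
      IsClosed {x : X | lam ≤ sfn (f x) u}) :
    Measurable f := by
  haveI : SecondCountableTopology (ConvexBody (EuclideanSpace ℝ (Fin n))) := by
    let J : ConvexBody (EuclideanSpace ℝ (Fin n)) →
        TopologicalSpace.NonemptyCompacts (EuclideanSpace ℝ (Fin n)) :=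
      fun K => ⟨⟨K, K.isCompact⟩, K.nonempty⟩
    have hJ : Isometry J := Isometry.of_dist_eq fun K L => by
      rw [Metric.NonemptyCompacts.dist_eq]; rfl
    exact hJ.isEmbedding.secondCountableTopology
  refine measurable_of_isOpen fun s hs => ?_
  obtain ⟨D, hDc, hDd⟩ :=
    TopologicalSpace.exists_countable_dense (ConvexBody (EuclideanSpace ℝ (Fin n)))
  have key : f ⁻¹' s = ⋃ K ∈ D, ⋃ (q : ℚ), ⋃ (_ : Metric.ball K (q : ℝ) ⊆ s),
      {x : X | dist (f x) K < (q : ℝ)} := by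
    ext x
    simp only [Set.mem_preimage, Set.mem_iUnion, Set.mem_setOf_eq]
    constructor
    · intro hfx
      obtain ⟨ε, hε, hball⟩ := Metric.isOpen_iff.1 hs (f x) hfx
      obtain ⟨K, hKD, hKd⟩ := hDd.exists_dist_lt (f x) (half_pos hε)
      obtain ⟨q, hq1, hq2⟩ := exists_rat_btwn hKd
      refine ⟨K, hKD, q, fun w hw => hball ?_, hq1⟩
      rw [Metric.mem_ball] at hw ⊢
      calc dist w (f x) ≤ dist w K + dist K (f x) := dist_triangle _ _ _
        _ < (q : ℝ) + (q : ℝ) := by rw [dist_comm K (f x)]; exact add_lt_add hw hq1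
        _ < ε := by linarith
    · rintro ⟨K, _, q, hsub, hlt⟩
      exact hsub (Metric.mem_ball.2 hlt)
  rw [key]
  refine MeasurableSet.biUnion hDc fun K _ => ?_
  refine MeasurableSet.iUnion fun q => MeasurableSet.iUnion fun _ => ?_
  exact measurable_dist_comp f h K measurableSet_Iio
end
end
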